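/- arXiv:0711.3136 — 5 statements merged into one kernel-verified Lean document; each statement's English description precedes it below -/
import Mathlib

section
/- Let A, B, C be events in a finite probability space such that (i) Pr(A∩C) ≥ Pr(A)Pr(C) and Pr(B∩C) ≥ Pr(B)Pr(C), and (ii) A and B are conditionally positively correlated given C and given the complement of C (i.e., Pr(A∩B|C) ≥ Pr(A|C)Pr(B|C) when Pr(C) > 0, and similarly for Cᶜ). Then Pr(A∩B) ≥ Pr(A)Pr(B). -/
open Finset

/-- Probability of a (finset) event under weights `w`. -/
def Pr {Ω : Type*} [Fintype Ω] (w : Ω → ℝ) (S : Finset Ω) : ℝ := ∑ x ∈ S, w x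

lemma Pr_nonneg {Ω : Type*} [Fintype Ω] (w : Ω → ℝ) (hw : ∀ x, 0 ≤ w x) (S : Finset Ω) :
    0 ≤ Pr w S := Finset.sum_nonneg fun x _ => hw x

lemma Pr_mono {Ω : Type*} [Fintype Ω] (w : Ω → ℝ) (hw : ∀ x, 0 ≤ w x) {S T : Finset Ω}
    (h : S ⊆ T) : Pr w S ≤ Pr w T :=
  Finset.sum_le_sum_of_subset_of_nonneg h fun x _ _ => hw x

lemma Pr_split {Ω : Type*} [Fintype Ω] [DecidableEq Ω] (w : Ω → ℝ) (S C : Finset Ω) :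
    Pr w (S ∩ C) + Pr w (S ∩ Cᶜ) = Pr w S := by
  have h : S ∩ Cᶜ = S \ C := by ext x; simp [Finset.mem_sdiff, and_comm]
  rw [h]
  exact Finset.sum_inter_add_sum_sdiff S C w

/-- Lemma 1 of the paper: if A and B are each positively correlated with C,
and A, B are conditionally positively correlated given C and given Cᶜ,
then A and B are positively correlated. -/
theorem stmt_0 {Ω : Type*} [Fintype Ω] [DecidableEq Ω] (w : Ω → ℝ)
    (hw : ∀ x, 0 ≤ w x) (hsum : ∑ x, w x = 1)
    (A B C : Finset Ω)
    (hAC : Pr w (A ∩ C) ≥ Pr w A * Pr w C)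
    (hBC : Pr w (B ∩ C) ≥ Pr w B * Pr w C)
    (hcondC : 0 < Pr w C →
      Pr w (A ∩ B ∩ C) / Pr w C ≥ (Pr w (A ∩ C) / Pr w C) * (Pr w (B ∩ C) / Pr w C))
    (hcondCc : 0 < Pr w Cᶜ →
      Pr w (A ∩ B ∩ Cᶜ) / Pr w Cᶜ ≥ (Pr w (A ∩ Cᶜ) / Pr w Cᶜ) * (Pr w (B ∩ Cᶜ) / Pr w Cᶜ)) :
    Pr w (A ∩ B) ≥ Pr w A * Pr w B := by
  set p := Pr w C with hp_def
  set q := Pr w Cᶜ with hq_def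
  have hp0 : 0 ≤ p := Pr_nonneg w hw C
  have hq0 : 0 ≤ q := Pr_nonneg w hw Cᶜ
  have hpq : p + q = 1 := by
    have := Pr_split w Finset.univ C
    simp only [Finset.univ_inter] at this
    rw [hp_def, hq_def]
    rw [this]
    exact hsum
  set a1 := Pr w (A ∩ C) with ha1
  set a2 := Pr w (A ∩ Cᶜ) with ha2
  set b1 := Pr w (B ∩ C) with hb1
  set b2 := Pr w (B ∩ Cᶜ) with hb2
  set c1 := Pr w (A ∩ B ∩ C) with hc1
  set c2 := Pr w (A ∩ B ∩ Cᶜ) with hc2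
  have hA : a1 + a2 = Pr w A := Pr_split w A C
  have hB : b1 + b2 = Pr w B := Pr_split w B C
  have hAB : c1 + c2 = Pr w (A ∩ B) := Pr_split w (A ∩ B) C
  have ha1n : 0 ≤ a1 := Pr_nonneg w hw _
  have ha2n : 0 ≤ a2 := Pr_nonneg w hw _
  have hb1n : 0 ≤ b1 := Pr_nonneg w hw _
  have hb2n : 0 ≤ b2 := Pr_nonneg w hw _
  have hc1n : 0 ≤ c1 := Pr_nonneg w hw _
  have hc2n : 0 ≤ c2 := Pr_nonneg w hw _
  have ha1p : a1 ≤ p := Pr_mono w hw (Finset.inter_subset_right)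
  have hb1p : b1 ≤ p := Pr_mono w hw (Finset.inter_subset_right)
  have ha2q : a2 ≤ q := Pr_mono w hw (Finset.inter_subset_right)
  have hb2q : b2 ≤ q := Pr_mono w hw (Finset.inter_subset_right)
  rw [← hA, ← hB, ← hAB]
  clear_value p q a1 a2 b1 b2 c1 c2
  clear hp_def hq_def ha1 ha2 hb1 hb2 hc1 hc2 hsum hw
  rw [← hA] at hAC
  rw [← hB] at hBC
  clear hA hB hAB A B C w
  rcases eq_or_lt_of_le hp0 with hp | hp
  · -- p = 0
    have hq1 : q = 1 := by linarith
    have ha1z : a1 = 0 := le_antisymm (by linarith) ha1n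
    have hb1z : b1 = 0 := le_antisymm (by linarith) hb1n
    have h2 := hcondCc (by linarith)
    rw [hq1] at h2
    simp only [div_one] at h2
    nlinarith
  · rcases eq_or_lt_of_le hq0 with hq | hq
    · -- q = 0
      have hp1 : p = 1 := by linarith
      have ha2z : a2 = 0 := le_antisymm (by linarith) ha2n
      have hb2z : b2 = 0 := le_antisymm (by linarith) hb2n
      have h1 := hcondC (by linarith)
      rw [hp1] at h1
      simp only [div_one] at h1
      nlinarith
    · -- 0 < p, 0 < q
      have h1 := hcondC hp
      have h2 := hcondCc hq
      rw [ge_iff_le, div_mul_div_comm, div_le_div_iff₀ (by positivity) hp] at h1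
      rw [ge_iff_le, div_mul_div_comm, div_le_div_iff₀ (by positivity) hq] at h2
      have hc1' : a1 * b1 ≤ c1 * p := by
        have := le_of_mul_le_mul_right (by nlinarith : a1 * b1 * p ≤ c1 * p * p) hp
        linarith
      have hc2' : a2 * b2 ≤ c2 * q := by
        have := le_of_mul_le_mul_right (by nlinarith : a2 * b2 * q ≤ c2 * q * q) hq
        linarith
      have hAq : a2 * p ≤ a1 * q := by nlinarith [hAC]
      have hBq : b2 * p ≤ b1 * q := by nlinarith [hBC]
      have key : 0 ≤ (a1 * q - a2 * p) * (b1 * q - b2 * p) :=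
        mul_nonneg (by linarith) (by linarith)
      have hq1p : q = 1 - p := by linarith
      rw [hq1p] at key hc2'
      have step : (a1 + a2) * (b1 + b2) * (p * (1 - p)) ≤ a1 * b1 * (1 - p) + a2 * b2 * p := by
        nlinarith [key]
      have step2 : a1 * b1 * (1 - p) + a2 * b2 * p ≤ (c1 + c2) * (p * (1 - p)) := by
        nlinarith [mul_le_mul_of_nonneg_right hc1' (by linarith : (0:ℝ) ≤ 1 - p),
          mul_le_mul_of_nonneg_right hc2' hp0]
      have hpqpos : 0 < p * (1 - p) := mul_pos hp (by linarith)
      have := le_of_mul_le_mul_right (le_trans step step2) hpqpos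
      linarith
end

section
/- Let μ be a probability measure on {0,1}^E for a finite set E satisfying the positive lattice condition: μ(η)μ(τ) ≤ μ(η∧τ)μ(η∨τ) for all η, τ ∈ {0,1}^E, where ∧ and ∨ are coordinatewise min and max. Then for any F ⊆ E, e ∈ E\F, and configurations ξ ≤ ψ in {0,1}^F with μ(η ≡ ξ on F) > 0 and μ(η ≡ ψ on F) > 0, we have μ(η_e = 1 | η ≡ ξ on F) ≤ μ(η_e = 1 | η ≡ ψ on F). -/
open Finset
open scoped Classical FinsetFamily

/-- The positive lattice condition implies monotonicity of conditional
single-coordinate probabilities in the conditioning configuration. -/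
theorem stmt_2 {E : Type*} [Fintype E] [DecidableEq E] (μ : (E → Bool) → ℝ)
    (hnn : ∀ η, 0 ≤ μ η) (hsum : ∑ η, μ η = 1)
    (hplc : ∀ η τ : E → Bool, μ η * μ τ ≤ μ (η ⊓ τ) * μ (η ⊔ τ))
    (F : Finset E) (e : E) (he : e ∉ F) (ξ ψ : E → Bool)
    (hle : ∀ f ∈ F, ξ f ≤ ψ f)
    (hξpos : 0 < ∑ η ∈ Finset.univ.filter (fun η : E → Bool => ∀ f ∈ F, η f = ξ f), μ η)
    (hψpos : 0 < ∑ η ∈ Finset.univ.filter (fun η : E → Bool => ∀ f ∈ F, η f = ψ f), μ η) :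
    (∑ η ∈ Finset.univ.filter (fun η : E → Bool => (∀ f ∈ F, η f = ξ f) ∧ η e = true), μ η) /
      (∑ η ∈ Finset.univ.filter (fun η : E → Bool => ∀ f ∈ F, η f = ξ f), μ η) ≤
    (∑ η ∈ Finset.univ.filter (fun η : E → Bool => (∀ f ∈ F, η f = ψ f) ∧ η e = true), μ η) /
      (∑ η ∈ Finset.univ.filter (fun η : E → Bool => ∀ f ∈ F, η f = ψ f), μ η) := by
  classical
  set s : Finset (E → Bool) :=
    Finset.univ.filter (fun η : E → Bool => (∀ f ∈ F, η f = ξ f) ∧ η e = true) with hs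
  set t : Finset (E → Bool) :=
    Finset.univ.filter (fun η : E → Bool => ∀ f ∈ F, η f = ψ f) with ht
  have h4 := four_functions_theorem μ μ μ μ (fun η => hnn η) (fun η => hnn η)
    (fun η => hnn η) (fun η => hnn η) hplc s t
  have hinfs : ∑ a ∈ s ⊼ t, μ a ≤
      ∑ η ∈ Finset.univ.filter (fun η : E → Bool => ∀ f ∈ F, η f = ξ f), μ η := by
    apply Finset.sum_le_sum_of_subset_of_nonneg
    · intro c hc
      rw [Finset.mem_infs] at hc
      obtain ⟨a, ha, b, hb, rfl⟩ := hc
      simp only [hs, ht, Finset.mem_filter, Finset.mem_univ, true_and] at ha hb ⊢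
      intro f hf
      have h1 : a f = ξ f := ha.1 f hf
      have h2 : b f = ψ f := hb f hf
      have := hle f hf
      simp only [Pi.inf_apply, h1, h2]
      cases hx : ξ f <;> cases hy : ψ f <;> simp_all
    · intro _ _ _; exact hnn _
  have hsups : ∑ a ∈ s ⊻ t, μ a ≤
      ∑ η ∈ Finset.univ.filter
        (fun η : E → Bool => (∀ f ∈ F, η f = ψ f) ∧ η e = true), μ η := by
    apply Finset.sum_le_sum_of_subset_of_nonneg
    · intro c hc
      rw [Finset.mem_sups] at hc
      obtain ⟨a, ha, b, hb, rfl⟩ := hc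
      simp only [hs, ht, Finset.mem_filter, Finset.mem_univ, true_and] at ha hb ⊢
      constructor
      · intro f hf
        have h1 : a f = ξ f := ha.1 f hf
        have h2 : b f = ψ f := hb f hf
        have := hle f hf
        simp only [Pi.sup_apply, h1, h2]
        cases hx : ξ f <;> cases hy : ψ f <;> simp_all <;> exact absurd this (by decide)
      · simp [Pi.sup_apply, ha.2]
    · intro _ _ _; exact hnn _
  have key : (∑ a ∈ s, μ a) * (∑ a ∈ t, μ a) ≤
      (∑ η ∈ Finset.univ.filter (fun η : E → Bool => ∀ f ∈ F, η f = ξ f), μ η) *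
      (∑ η ∈ Finset.univ.filter
        (fun η : E → Bool => (∀ f ∈ F, η f = ψ f) ∧ η e = true), μ η) := by
    refine h4.trans (mul_le_mul hinfs hsups ?_ ?_)
    · exact Finset.sum_nonneg fun _ _ => hnn _
    · exact le_trans (Finset.sum_nonneg fun _ _ => hnn _) hinfs
  rw [div_le_div_iff₀ hξpos hψpos]
  linarith [key]
end

section
/- Let G = (V,E) be a finite graph, p : E → (0,1), and q ≥ 1. Define the random cluster measure φ on {0,1}^E by φ(η) proportional to ∏_{e∈E} p_e^{η_e}(1−p_e)^{1−η_e} · q^{k(η)}, where k(η) is the number of connected components of the graph (V, {e : η_e = 1}). Then φ satisfies the positive lattice condition: φ(η)φ(τ) ≤ φ(η∧τ)φ(η∨τ) for all η, τ ∈ {0,1}^E. -/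
open Finset

/-- The open subgraph of a (multi)graph with edge index set `E`, endpoints `ends`. -/
def openSub {V E : Type*} (ends : E → Sym2 V) (η : E → Bool) : SimpleGraph V :=
  SimpleGraph.fromEdgeSet {s | ∃ f, η f = true ∧ ends f = s}

/-- Number of connected components of the open subgraph. -/
noncomputable def numComp {V E : Type*} (ends : E → Sym2 V) (η : E → Bool) : ℕ :=
  Nat.card (openSub ends η).ConnectedComponent

/-- The (unnormalized) random-cluster weight. -/
noncomputable def rcWeight {V E : Type*} [Fintype E] (ends : E → Sym2 V)
    (p : E → ℝ) (q : ℝ) (η : E → Bool) : ℝ :=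
  (∏ f, if η f then p f else 1 - p f) * q ^ numComp ends η

/-- The random-cluster measure `φ_{p,q}`. -/
noncomputable def rcMeasure {V E : Type*} [Fintype V] [Fintype E] [DecidableEq E]
    (ends : E → Sym2 V) (p : E → ℝ) (q : ℝ) (η : E → Bool) : ℝ :=
  rcWeight ends p q η / ∑ τ : E → Bool, rcWeight ends p q τ

section Submod
open SimpleGraph
open SimpleGraph

variable {V : Type*} [Fintype V]

noncomputable def kk (G : SimpleGraph V) : ℕ := Nat.card G.ConnectedComponent

lemma ccmap_surj {G H : SimpleGraph V} (h : G ≤ H) :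
    Function.Surjective (ConnectedComponent.map (Hom.ofLE h)) := by
  intro c
  refine c.ind (fun v => ⟨G.connectedComponentMk v, rfl⟩)

lemma kk_le_of_le {G H : SimpleGraph V} (h : G ≤ H) : kk H ≤ kk G :=
  Nat.card_le_card_of_surjective _ (ccmap_surj h)

lemma reachable_sup_edge {G : SimpleGraph V} {a b u v : V}
    (h : (G ⊔ edge a b).Reachable u v) :
    G.Reachable u v ∨ (G.Reachable u a ∧ G.Reachable b v) ∨ (G.Reachable u b ∧ G.Reachable a v) := by
  obtain ⟨w⟩ := h
  induction w with
  | nil => exact Or.inl (Reachable.refl _)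
  | cons hadj p ih =>
    rename_i x y z
    rcases hadj with hG | he
    · rcases ih with h1 | ⟨h1, h2⟩ | ⟨h1, h2⟩
      · exact Or.inl ((Adj.reachable hG).trans h1)
      · exact Or.inr (Or.inl ⟨(Adj.reachable hG).trans h1, h2⟩)
      · exact Or.inr (Or.inr ⟨(Adj.reachable hG).trans h1, h2⟩)
    · rw [edge_adj] at he
      obtain ⟨⟨hx, hy⟩ | ⟨hx, hy⟩, _⟩ := he
      · subst hx; subst hy
        rcases ih with h1 | ⟨h1, h2⟩ | ⟨h1, h2⟩
        · exact Or.inr (Or.inl ⟨Reachable.refl _, h1⟩)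
        · exact Or.inl (h1.symm.trans h2)
        · exact Or.inl h2
      · subst hx; subst hy
        rcases ih with h1 | ⟨h1, h2⟩ | ⟨h1, h2⟩
        · exact Or.inr (Or.inr ⟨Reachable.refl _, h1⟩)
        · exact Or.inl h2
        · exact Or.inl (h1.symm.trans h2)

open Classical in
lemma map_eq_cases {G : SimpleGraph V} {a b : V} (c d : G.ConnectedComponent)
    (h : ConnectedComponent.map (Hom.ofLE (le_sup_left : G ≤ G ⊔ edge a b)) c =
      ConnectedComponent.map (Hom.ofLE le_sup_left) d) :
    c = d ∨ (c = G.connectedComponentMk a ∧ d = G.connectedComponentMk b) ∨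
      (c = G.connectedComponentMk b ∧ d = G.connectedComponentMk a) := by
  revert h
  refine ConnectedComponent.ind₂ (fun u v h => ?_) c d
  have h' : (G ⊔ edge a b).Reachable u v := by
    rw [← ConnectedComponent.eq]
    simpa [ConnectedComponent.map_mk] using h
  rcases reachable_sup_edge h' with h1 | ⟨h1, h2⟩ | ⟨h1, h2⟩
  · exact Or.inl (ConnectedComponent.sound h1)
  · exact Or.inr (Or.inl ⟨ConnectedComponent.sound h1, ConnectedComponent.sound h2.symm⟩)
  · exact Or.inr (Or.inr ⟨ConnectedComponent.sound h1, ConnectedComponent.sound h2.symm⟩)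

lemma kk_sup_edge_eq_of_reachable {G : SimpleGraph V} {a b : V} (h : G.Reachable a b) :
    kk (G ⊔ edge a b) = kk G := by
  refine le_antisymm (kk_le_of_le le_sup_left) (Nat.card_le_card_of_injective
    (ConnectedComponent.map (Hom.ofLE (le_sup_left : G ≤ G ⊔ edge a b))) ?_)
  intro c d hcd
  rcases map_eq_cases c d hcd with h1 | ⟨h1, h2⟩ | ⟨h1, h2⟩
  · exact h1
  · rw [h1, h2]; exact ConnectedComponent.sound h
  · rw [h1, h2]; exact ConnectedComponent.sound h.symm

lemma kk_sup_edge_lt {G : SimpleGraph V} {a b : V} (hab : a ≠ b) (h : ¬ G.Reachable a b) :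
    kk (G ⊔ edge a b) < kk G := by
  refine lt_of_le_of_ne (kk_le_of_le le_sup_left) (fun hEq => ?_)
  have hfin : Finite G.ConnectedComponent := Finite.of_surjective G.connectedComponentMk (fun c => c.ind (fun v => ⟨v, rfl⟩))
  have hfin2 : Finite (G ⊔ edge a b).ConnectedComponent :=
    Finite.of_surjective (G ⊔ edge a b).connectedComponentMk (fun c => c.ind (fun v => ⟨v, rfl⟩))
  have hsurj := ccmap_surj (le_sup_left : G ≤ G ⊔ edge a b)
  have hbij : Function.Bijective (ConnectedComponent.map (Hom.ofLE (le_sup_left : G ≤ G ⊔ edge a b))) := by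
    have := Fintype.ofFinite G.ConnectedComponent
    have := Fintype.ofFinite (G ⊔ edge a b).ConnectedComponent
    rw [Fintype.bijective_iff_surjective_and_card]
    refine ⟨hsurj, ?_⟩
    rw [← Nat.card_eq_fintype_card, ← Nat.card_eq_fintype_card]
    exact hEq.symm
  have hadj : (G ⊔ edge a b).Adj a b := by
    right
    rw [edge_adj]
    exact ⟨Or.inl ⟨rfl, rfl⟩, hab⟩
  have : G.connectedComponentMk a = G.connectedComponentMk b := by
    apply hbij.injective
    simp only [ConnectedComponent.map_mk, Hom.coe_ofLE, id_eq]
    exact ConnectedComponent.sound hadj.reachable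
  exact h (ConnectedComponent.exact this)

open Classical in
lemma kk_le_sup_edge_succ (G : SimpleGraph V) (a b : V) :
    kk G ≤ kk (G ⊔ edge a b) + 1 := by
  have hfin2 : Finite (G ⊔ edge a b).ConnectedComponent :=
    Finite.of_surjective (G ⊔ edge a b).connectedComponentMk (fun c => c.ind (fun v => ⟨v, rfl⟩))
  have hinj : Function.Injective (fun c : G.ConnectedComponent =>
      if c = G.connectedComponentMk b then (none : Option (G ⊔ edge a b).ConnectedComponent)
      else some (ConnectedComponent.map (Hom.ofLE le_sup_left) c)) := by
    intro c d hcd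
    by_cases hc : c = G.connectedComponentMk b <;> by_cases hd : d = G.connectedComponentMk b <;>
      simp [hc, hd] at hcd ⊢
    · rcases map_eq_cases c d hcd with h1 | ⟨h1, h2⟩ | ⟨h1, h2⟩
      · exact h1
      · exact absurd h2 hd
      · exact absurd h1 hc
  calc kk G ≤ Nat.card (Option (G ⊔ edge a b).ConnectedComponent) :=
        Nat.card_le_card_of_injective _ hinj
    _ = kk (G ⊔ edge a b) + 1 := Finite.card_option

lemma one_edge {G G' : SimpleGraph V} (h : G ≤ G') (a b : V) :
    kk G' + kk (G ⊔ edge a b) ≤ kk G + kk (G' ⊔ edge a b) := by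
  by_cases hab : a = b
  · subst hab
    simp only [sup_edge_self]
    omega
  by_cases hr : G'.Reachable a b
  · rw [kk_sup_edge_eq_of_reachable hr]
    have := kk_le_of_le (le_sup_left : G ≤ G ⊔ edge a b)
    omega
  · have hG : ¬ G.Reachable a b := fun hh => hr (hh.mono h)
    have h1 := kk_sup_edge_lt hab hG
    have h2 := kk_le_sup_edge_succ G' a b
    omega

lemma one_edge_sym2 {G G' : SimpleGraph V} (h : G ≤ G') (s : Sym2 V) :
    kk G' + kk (G ⊔ fromEdgeSet {s}) ≤ kk G + kk (G' ⊔ fromEdgeSet {s}) := by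
  induction s using Sym2.ind with
  | _ a b => exact one_edge h a b

lemma submod_finset (t : Finset (Sym2 V)) : ∀ G G' : SimpleGraph V, G ≤ G' →
    kk G' + kk (G ⊔ fromEdgeSet ↑t) ≤ kk G + kk (G' ⊔ fromEdgeSet ↑t) := by
  classical
  induction t using Finset.induction_on with
  | empty =>
    intro G G' h
    simp only [Finset.coe_empty, fromEdgeSet_empty, sup_bot_eq]
    have := kk_le_of_le h
    omega
  | insert a t ha ih =>
    intro G G' hle
    have hcoe : (↑(insert a t) : Set (Sym2 V)) = {a} ∪ ↑t := by
      rw [Finset.coe_insert, Set.insert_eq]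
    rw [hcoe, fromEdgeSet_union, ← sup_assoc, ← sup_assoc]
    have h1 := one_edge_sym2 hle a
    have h2 := ih (G ⊔ fromEdgeSet {a}) (G' ⊔ fromEdgeSet {a}) (sup_le_sup_right hle _)
    omega
end Submod

section Main

variable {V E : Type*} [Fintype V]

lemma openSub_mono {ends : E → Sym2 V} {η τ : E → Bool} (h : ∀ f, η f = true → τ f = true) :
    openSub ends η ≤ openSub ends τ := by
  apply SimpleGraph.fromEdgeSet_mono
  rintro s ⟨f, hf, rfl⟩
  exact ⟨f, h f hf, rfl⟩

lemma openSub_sup (ends : E → Sym2 V) (η τ : E → Bool) :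
    openSub ends (η ⊔ τ) = openSub ends η ⊔ openSub ends τ := by
  rw [openSub, openSub, openSub, ← SimpleGraph.fromEdgeSet_union]
  congr 1
  ext s
  constructor
  · rintro ⟨f, hf, rfl⟩
    rcases Bool.or_eq_true_iff.mp hf with h | h
    · exact Or.inl ⟨f, h, rfl⟩
    · exact Or.inr ⟨f, h, rfl⟩
  · rintro (⟨f, hf, rfl⟩ | ⟨f, hf, rfl⟩)
    · exact ⟨f, Bool.or_eq_true_iff.mpr (Or.inl hf), rfl⟩
    · exact ⟨f, Bool.or_eq_true_iff.mpr (Or.inr hf), rfl⟩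

lemma numComp_submod (ends : E → Sym2 V) (η τ : E → Bool) :
    numComp ends η + numComp ends τ ≤ numComp ends (η ⊓ τ) + numComp ends (η ⊔ τ) := by
  classical
  haveI : Finite (Sym2 V) :=
    Finite.of_surjective (fun p : V × V => s(p.1, p.2))
      (fun s => Sym2.ind (fun a b => ⟨(a, b), rfl⟩) s)
  set S : Set (Sym2 V) := {s | ∃ f, τ f = true ∧ ends f = s} with hS
  have hfin : S.Finite := Set.toFinite S
  have hmono : openSub ends (η ⊓ τ) ≤ openSub ends η :=
    openSub_mono (fun f hf => (Bool.and_eq_true_iff.mp hf).1)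
  have key := submod_finset hfin.toFinset (openSub ends (η ⊓ τ)) (openSub ends η) hmono
  rw [hfin.coe_toFinset] at key
  have hτeq : SimpleGraph.fromEdgeSet S = openSub ends τ := rfl
  rw [hτeq] at key
  have hmono2 : openSub ends (η ⊓ τ) ≤ openSub ends τ :=
    openSub_mono (fun f hf => (Bool.and_eq_true_iff.mp hf).2)
  rw [sup_eq_right.mpr hmono2, ← openSub_sup] at key
  exact key

end Main

section Thm

variable {V E : Type*} [Fintype V] [Fintype E] [DecidableEq E]

lemma rcWeight_pos (ends : E → Sym2 V) (p : E → ℝ) (q : ℝ)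
    (hp : ∀ f, 0 < p f ∧ p f < 1) (hq : 1 ≤ q) (η : E → Bool) :
    0 < rcWeight ends p q η := by
  apply mul_pos
  · apply Finset.prod_pos
    intro f _
    by_cases h : η f <;> simp [h]
    · exact (hp f).1
    · linarith [(hp f).2]
  · exact pow_pos (lt_of_lt_of_le one_pos hq) _

lemma rcWeight_submod (ends : E → Sym2 V) (p : E → ℝ) (q : ℝ)
    (hp : ∀ f, 0 < p f ∧ p f < 1) (hq : 1 ≤ q) (η τ : E → Bool) :
    rcWeight ends p q η * rcWeight ends p q τ ≤
      rcWeight ends p q (η ⊓ τ) * rcWeight ends p q (η ⊔ τ) := by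
  have hProd : (∏ f, if η f then p f else 1 - p f) * (∏ f, if τ f then p f else 1 - p f) =
      (∏ f, if (η ⊓ τ) f then p f else 1 - p f) * (∏ f, if (η ⊔ τ) f then p f else 1 - p f) := by
    rw [← Finset.prod_mul_distrib, ← Finset.prod_mul_distrib]
    apply Finset.prod_congr rfl
    intro f _
    cases hη : η f <;> cases hτ : τ f <;>
      simp [Pi.inf_apply, Pi.sup_apply, hη, hτ, mul_comm]
  have hfac : ∀ (σ : E → Bool) (f : E), (0:ℝ) ≤ if σ f then p f else 1 - p f := by
    intro σ f
    split_ifs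
    · linarith [(hp f).1]
    · linarith [(hp f).2]
  have hPpos : 0 ≤ (∏ f, if η f then p f else 1 - p f) * (∏ f, if τ f then p f else 1 - p f) :=
    mul_nonneg (Finset.prod_nonneg fun f _ => hfac η f)
      (Finset.prod_nonneg fun f _ => hfac τ f)
  have hq0 : (0:ℝ) < q := lt_of_lt_of_le one_pos hq
  have hkey := numComp_submod ends η τ
  calc rcWeight ends p q η * rcWeight ends p q τ
      = ((∏ f, if η f then p f else 1 - p f) * (∏ f, if τ f then p f else 1 - p f)) *
        q ^ (numComp ends η + numComp ends τ) := by
        rw [rcWeight, rcWeight, pow_add]; ring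
    _ ≤ ((∏ f, if η f then p f else 1 - p f) * (∏ f, if τ f then p f else 1 - p f)) *
        q ^ (numComp ends (η ⊓ τ) + numComp ends (η ⊔ τ)) := by
        apply mul_le_mul_of_nonneg_left _ hPpos
        exact pow_le_pow_right₀ (by linarith) hkey
    _ = rcWeight ends p q (η ⊓ τ) * rcWeight ends p q (η ⊔ τ) := by
        rw [rcWeight, rcWeight, pow_add, hProd]; ring

end Thm

/-- The random-cluster measure with `q ≥ 1` satisfies the positive lattice condition. -/
theorem stmt_3 {V E : Type*} [Fintype V] [Fintype E] [DecidableEq E]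
    (ends : E → Sym2 V) (p : E → ℝ) (q : ℝ)
    (hp : ∀ f, 0 < p f ∧ p f < 1) (hq : 1 ≤ q)
    (η τ : E → Bool) :
    rcMeasure ends p q η * rcMeasure ends p q τ ≤
      rcMeasure ends p q (η ⊓ τ) * rcMeasure ends p q (η ⊔ τ) := by
  have hZ : 0 < ∑ σ : E → Bool, rcWeight ends p q σ :=
    Finset.sum_pos (fun σ _ => rcWeight_pos ends p q hp hq σ) ⟨η, Finset.mem_univ η⟩
  rw [rcMeasure, rcMeasure, rcMeasure, rcMeasure, div_mul_div_comm, div_mul_div_comm]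
  apply div_le_div_of_nonneg_right _ (mul_pos hZ hZ).le
  exact rcWeight_submod ends p q hp hq η τ
end

section
/- Let G be the graph consisting of two vertices x and y joined by an edge e together with m internally disjoint paths of length 2 between x and y (so G has m+2 vertices and 2m+1 edges). Under the uniform measure on spanning forests of G (spanning subgraphs with no cycles), if m > 6 then the events {e is in the forest} and {the forest is connected, i.e., a spanning tree} are strictly negatively correlated: Pr(e ∈ F and F spanning tree) < Pr(e ∈ F)·Pr(F spanning tree). -/
open SimpleGraph

/-- The graph on vertices `x = 0`, `y = 1`, `z_1, …, z_m` consisting of the edge `xy`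
together with the `m` paths `x – z_i – y`. -/
def thetaGraph (m : ℕ) : SimpleGraph (Fin (m + 2)) :=
  SimpleGraph.fromEdgeSet
    ({s((0 : Fin (m + 2)), (1 : Fin (m + 2)))} ∪
      {s | ∃ i : Fin m, s = s((0 : Fin (m + 2)), (⟨i.1 + 2, by omega⟩ : Fin (m + 2))) ∨
        s = s((1 : Fin (m + 2)), (⟨i.1 + 2, by omega⟩ : Fin (m + 2)))})

namespace ThetaAux

variable {m : ℕ}

abbrev Code (m : ℕ) := Bool × (Fin m → Bool × Bool)

def zv (m : ℕ) (i : Fin m) : Fin (m + 2) := ⟨i.1 + 2, by omega⟩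

lemma val_zero' : ((0 : Fin (m + 2)) : ℕ) = 0 := rfl

lemma val_one' : ((1 : Fin (m + 2)) : ℕ) = 1 := by
  simp [Fin.val_one]

lemma val_zv (i : Fin m) : ((zv m i : Fin (m + 2)) : ℕ) = i.1 + 2 := rfl

lemma zero_ne_one' : (0 : Fin (m + 2)) ≠ 1 := by
  simp [Fin.ext_iff, val_zero', val_one']

lemma zv_ne_zero (i : Fin m) : zv m i ≠ 0 := by
  simp [Fin.ext_iff, val_zero', val_zv]

lemma zv_ne_one (i : Fin m) : zv m i ≠ 1 := by
  simp [Fin.ext_iff, val_one', val_zv]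

lemma zv_inj {i j : Fin m} (h : zv m i = zv m j) : i = j := by
  rw [Fin.ext_iff, val_zv, val_zv] at h
  exact Fin.ext (by omega)

/-- the subgraph of `thetaGraph` coded by `c`. -/
def graphOf (m : ℕ) (c : Code m) : SimpleGraph (Fin (m + 2)) :=
  SimpleGraph.fromEdgeSet
    {s | (c.1 = true ∧ s = s((0 : Fin (m+2)), 1)) ∨
      ∃ i : Fin m, ((c.2 i).1 = true ∧ s = s((0 : Fin (m+2)), zv m i)) ∨
        ((c.2 i).2 = true ∧ s = s((1 : Fin (m+2)), zv m i))}

lemma graphOf_adj (c : Code m) (u v : Fin (m + 2)) :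
    (graphOf m c).Adj u v ↔
      (((c.1 = true ∧ s(u,v) = s((0 : Fin (m+2)), 1)) ∨
        ∃ i : Fin m, ((c.2 i).1 = true ∧ s(u,v) = s((0 : Fin (m+2)), zv m i)) ∨
          ((c.2 i).2 = true ∧ s(u,v) = s((1 : Fin (m+2)), zv m i))) ∧ u ≠ v) := by
  rw [graphOf, fromEdgeSet_adj]
  rfl

lemma theta_eq : thetaGraph m = graphOf m (true, fun _ => (true, true)) := by
  unfold thetaGraph graphOf
  congr 1
  ext s
  simp [zv]

lemma graphOf_le (c : Code m) : graphOf m c ≤ thetaGraph m := by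
  rw [theta_eq]
  apply SimpleGraph.fromEdgeSet_mono
  rintro s (⟨-, rfl⟩ | ⟨i, (⟨-, rfl⟩ | ⟨-, rfl⟩)⟩)
  · exact Or.inl ⟨rfl, rfl⟩
  · exact Or.inr ⟨i, Or.inl ⟨rfl, rfl⟩⟩
  · exact Or.inr ⟨i, Or.inr ⟨rfl, rfl⟩⟩

/-- every adjacency in `graphOf` is of one of six shapes -/
lemma adj_cases {c : Code m} {u v : Fin (m + 2)} (h : (graphOf m c).Adj u v) :
    (c.1 = true ∧ ((u = 0 ∧ v = 1) ∨ (u = 1 ∧ v = 0))) ∨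
    ∃ i : Fin m,
      ((c.2 i).1 = true ∧ ((u = 0 ∧ v = zv m i) ∨ (u = zv m i ∧ v = 0))) ∨
      ((c.2 i).2 = true ∧ ((u = 1 ∧ v = zv m i) ∨ (u = zv m i ∧ v = 1))) := by
  rw [graphOf_adj] at h
  obtain ⟨(⟨hb, he⟩ | ⟨i, (⟨hb, he⟩ | ⟨hb, he⟩)⟩), -⟩ := h <;>
    rw [Sym2.eq_iff] at he
  · exact Or.inl ⟨hb, he⟩
  · exact Or.inr ⟨i, Or.inl ⟨hb, he⟩⟩
  · exact Or.inr ⟨i, Or.inr ⟨hb, he⟩⟩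

lemma adj_01 (c : Code m) : (graphOf m c).Adj 0 1 ↔ c.1 = true := by
  constructor
  · intro h
    rcases adj_cases h with ⟨hb, -⟩ | ⟨i, (⟨hb, he⟩ | ⟨hb, he⟩)⟩
    · exact hb
    all_goals
      exfalso
      simp only [Fin.ext_iff, val_zero', val_one', val_zv] at he
      omega
  · intro h
    rw [graphOf_adj]
    exact ⟨Or.inl ⟨h, rfl⟩, zero_ne_one'⟩

lemma adj_0z (c : Code m) (i : Fin m) :
    (graphOf m c).Adj 0 (zv m i) ↔ (c.2 i).1 = true := by
  constructor
  · intro h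
    rcases adj_cases h with ⟨-, he⟩ | ⟨j, (⟨hb, he⟩ | ⟨-, he⟩)⟩
    · exfalso
      simp only [Fin.ext_iff, val_zero', val_one', val_zv] at he
      omega
    · obtain rfl : j = i := by
        apply Fin.ext
        simp only [Fin.ext_iff, val_zero', val_one', val_zv] at he
        omega
      exact hb
    · exfalso
      simp only [Fin.ext_iff, val_zero', val_one', val_zv] at he
      omega
  · intro h
    rw [graphOf_adj]
    exact ⟨Or.inr ⟨i, Or.inl ⟨h, rfl⟩⟩, (zv_ne_zero i).symm⟩

lemma adj_1z (c : Code m) (i : Fin m) :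
    (graphOf m c).Adj 1 (zv m i) ↔ (c.2 i).2 = true := by
  constructor
  · intro h
    rcases adj_cases h with ⟨-, he⟩ | ⟨j, (⟨-, he⟩ | ⟨hb, he⟩)⟩
    · exfalso
      simp only [Fin.ext_iff, val_zero', val_one', val_zv] at he
      omega
    · exfalso
      simp only [Fin.ext_iff, val_zero', val_one', val_zv] at he
      omega
    · obtain rfl : j = i := by
        apply Fin.ext
        simp only [Fin.ext_iff, val_zero', val_one', val_zv] at he
        omega
      exact hb
  · intro h
    rw [graphOf_adj]
    exact ⟨Or.inr ⟨i, Or.inr ⟨h, rfl⟩⟩, (zv_ne_one i).symm⟩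

end ThetaAux

namespace ThetaAux

variable {m : ℕ}

lemma graphOf_injective : Function.Injective (graphOf m) := by
  intro c c' h
  have h01 := (adj_01 c').mp
  have h01' := (adj_01 c).mp
  ext1
  · rw [Bool.eq_iff_iff, ← adj_01 c, ← adj_01 c', h]
  · funext i
    ext1
    · rw [Bool.eq_iff_iff, ← adj_0z c i, ← adj_0z c' i, h]
    · rw [Bool.eq_iff_iff, ← adj_1z c i, ← adj_1z c' i, h]

lemma graphOf_surj {H : SimpleGraph (Fin (m + 2))} (hH : H ≤ thetaGraph m) :
    ∃ c : Code m, graphOf m c = H := by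
  classical
  refine ⟨(decide (H.Adj 0 1), fun i => (decide (H.Adj 0 (zv m i)), decide (H.Adj 1 (zv m i)))), ?_⟩
  ext u v
  constructor
  · intro h
    rcases adj_cases h with ⟨hb, hc⟩ | ⟨i, (⟨hb, hc⟩ | ⟨hb, hc⟩)⟩ <;>
      simp only [decide_eq_true_eq] at hb <;>
      rcases hc with ⟨rfl, rfl⟩ | ⟨rfl, rfl⟩ <;>
      first | exact hb | exact hb.symm
  · intro h
    have hθ : (thetaGraph m).Adj u v := hH h
    rw [theta_eq] at hθ
    rcases adj_cases hθ with ⟨-, hc⟩ | ⟨i, (⟨-, hc⟩ | ⟨-, hc⟩)⟩ <;>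
      rcases hc with ⟨rfl, rfl⟩ | ⟨rfl, rfl⟩
    · exact (adj_01 _).mpr (by simpa using h)
    · exact ((adj_01 _).mpr (by simpa using h.symm)).symm
    · exact (adj_0z _ i).mpr (by simpa using h)
    · exact ((adj_0z _ i).mpr (by simpa using h.symm)).symm
    · exact (adj_1z _ i).mpr (by simpa using h)
    · exact ((adj_1z _ i).mpr (by simpa using h.symm)).symm

/-- transfer of cardinalities from graph subtypes to code subtypes -/
lemma card_transfer (P : SimpleGraph (Fin (m + 2)) → Prop) (Q : Code m → Prop)
    [DecidablePred Q] (hPQ : ∀ c, P (graphOf m c) ↔ Q c) :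
    Nat.card {H : SimpleGraph (Fin (m + 2)) // H ≤ thetaGraph m ∧ P H} =
      Fintype.card {c : Code m // Q c} := by
  have e : {c : Code m // Q c} ≃ {H : SimpleGraph (Fin (m + 2)) // H ≤ thetaGraph m ∧ P H} := by
    refine Equiv.ofBijective (fun c => ⟨graphOf m c.1, graphOf_le c.1, (hPQ c.1).mpr c.2⟩) ⟨?_, ?_⟩
    · intro c c' h
      exact Subtype.ext (graphOf_injective (by simpa using congrArg Subtype.val h))
    · rintro ⟨H, hle, hP⟩
      obtain ⟨c, rfl⟩ := graphOf_surj hle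
      exact ⟨⟨c, (hPQ c).mp hP⟩, rfl⟩
  rw [← Nat.card_eq_fintype_card, Nat.card_congr e]

end ThetaAux

namespace ThetaAux

variable {m : ℕ}

lemma color_eq_of_reachable {V : Type*} {G : SimpleGraph V} (φ : V → Bool)
    (h : ∀ u v, G.Adj u v → φ u = φ v) {u v : V} (hr : G.Reachable u v) : φ u = φ v := by
  obtain ⟨w⟩ := hr
  induction w with
  | nil => rfl
  | cons h' p ih => exact (h _ _ h').trans ih

lemma vertex_cases (v : Fin (m + 2)) : v = 0 ∨ v = 1 ∨ ∃ i : Fin m, v = zv m i := by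
  rcases Nat.lt_or_ge v.1 2 with h | h
  · interval_cases hv : v.1
    · exact Or.inl (Fin.ext hv)
    · exact Or.inr (Or.inl (Fin.ext (by rw [hv, val_one'])))
  · exact Or.inr (Or.inr ⟨⟨v.1 - 2, by omega⟩, Fin.ext (by rw [val_zv]; simp; omega)⟩)

lemma exists_adj_of_reachable {V : Type*} {G : SimpleGraph V} {u v : V}
    (hr : G.Reachable u v) (hne : u ≠ v) : ∃ w, G.Adj w v := by
  obtain ⟨w⟩ := hr
  induction w with
  | nil => exact absurd rfl hne
  | @cons a b c h' p ih =>
    by_cases hbc : b = c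
    · exact ⟨a, hbc ▸ h'⟩
    · exact ih hbc

lemma adj_to_zv {c : Code m} {u : Fin (m + 2)} {i : Fin m}
    (h : (graphOf m c).Adj u (zv m i)) :
    (u = 0 ∧ (c.2 i).1 = true) ∨ (u = 1 ∧ (c.2 i).2 = true) := by
  rcases adj_cases h with ⟨-, (⟨-, h1⟩ | ⟨-, h1⟩)⟩ |
    ⟨j, (⟨hb, (⟨rfl, h1⟩ | ⟨-, h1⟩)⟩ | ⟨hb, (⟨rfl, h1⟩ | ⟨-, h1⟩)⟩)⟩
  · exact absurd h1 (zv_ne_one i)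
  · exact absurd h1 (zv_ne_zero i)
  · obtain rfl := zv_inj h1
    exact Or.inl ⟨rfl, hb⟩
  · exact absurd h1 (zv_ne_zero i)
  · obtain rfl := zv_inj h1
    exact Or.inr ⟨rfl, hb⟩
  · exact absurd h1 (zv_ne_one i)

/-- the canonical coloring: `0 ↦ false`, `1 ↦ true`, `z i ↦ (c.2 i).2` with override `f`. -/
def colorY (c : Code m) (f : Fin m → Bool → Bool) : Fin (m + 2) → Bool := fun v =>
  if h : 2 ≤ v.1 then f ⟨v.1 - 2, by omega⟩ (c.2 ⟨v.1 - 2, by omega⟩).2 else decide (v.1 = 1)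

@[simp] lemma colorY_zero (c : Code m) (f) : colorY c f 0 = false := by
  simp [colorY, val_zero']

@[simp] lemma colorY_one (c : Code m) (f) : colorY c f 1 = true := by
  simp [colorY, val_one']

@[simp] lemma colorY_zv (c : Code m) (f) (i : Fin m) :
    colorY c f (zv m i) = f i (c.2 i).2 := by
  have h2 : 2 ≤ (zv m i).1 := by rw [val_zv]; omega
  have h3 : (⟨(zv m i).1 - 2, by omega⟩ : Fin m) = i := Fin.ext (by simp [val_zv])
  rw [colorY, dif_pos h2, h3]

def connP (c : Code m) : Prop :=
  (∀ i, (c.2 i).1 = true ∨ (c.2 i).2 = true) ∧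
    (c.1 = true ∨ ∃ i, (c.2 i).1 = true ∧ (c.2 i).2 = true)

instance (c : Code m) : Decidable (connP c) := by unfold connP; infer_instance

lemma connected_iff_connP (c : Code m) : (graphOf m c).Connected ↔ connP c := by
  constructor
  · intro h
    constructor
    · intro i
      obtain ⟨w, hw⟩ := exists_adj_of_reachable (h.preconnected 0 (zv m i)) (zv_ne_zero i).symm
      rcases adj_to_zv hw with ⟨-, h1⟩ | ⟨-, h1⟩
      · exact Or.inl h1
      · exact Or.inr h1
    · by_contra hcon
      push_neg at hcon
      obtain ⟨hb, hboth⟩ := hcon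
      have key : ∀ u v, (graphOf m c).Adj u v → colorY c (fun _ b => b) u = colorY c (fun _ b => b) v := by
        intro u v huv
        rcases adj_cases huv with ⟨hb', -⟩ | ⟨i, (⟨h1, hc⟩ | ⟨h1, hc⟩)⟩
        · exact absurd hb' hb
        · have h2 : (c.2 i).2 = false := Bool.eq_false_iff.mpr (hboth i h1)
          rcases hc with ⟨rfl, rfl⟩ | ⟨rfl, rfl⟩ <;> simp [h2]
        · rcases hc with ⟨rfl, rfl⟩ | ⟨rfl, rfl⟩ <;> simp [h1]
      have := color_eq_of_reachable _ key (h.preconnected 0 1)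
      simp at this
  · rintro ⟨h1, h2⟩
    have reach01 : (graphOf m c).Reachable 0 1 := by
      rcases h2 with hb | ⟨i, hi1, hi2⟩
      · exact ((adj_01 c).mpr hb).reachable
      · exact (((adj_0z c i).mpr hi1).reachable).trans
          (((adj_1z c i).mpr hi2).symm.reachable)
    have reach : ∀ v, (graphOf m c).Reachable 0 v := by
      intro v
      rcases vertex_cases v with rfl | rfl | ⟨i, rfl⟩
      · exact Reachable.refl _
      · exact reach01
      · rcases h1 i with ha | ha
        · exact ((adj_0z c i).mpr ha).reachable
        · exact reach01.trans ((adj_1z c i).mpr ha).reachable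
    rw [SimpleGraph.connected_iff]
    exact ⟨fun u v => (reach u).symm.trans (reach v), ⟨0⟩⟩

end ThetaAux

namespace ThetaAux

variable {m : ℕ}

lemma not_acyclic_of_triangle {V : Type*} {G : SimpleGraph V} {a b c : V} (h1 : G.Adj a b)
    (h2 : G.Adj b c) (h3 : G.Adj c a) (hab : a ≠ b) (hac : a ≠ c) (hbc : b ≠ c) :
    ¬ G.IsAcyclic := by
  intro hacy
  exact hacy (Walk.cons h1 (Walk.cons h2 (Walk.cons h3 Walk.nil)))
    (by simp [Walk.isCycle_def, Walk.isTrail_def, hab, hac, hbc, hab.symm, hac.symm,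
        hbc.symm, Sym2.eq_iff])

lemma not_acyclic_of_square {V : Type*} {G : SimpleGraph V} {a b c d : V} (h1 : G.Adj a b)
    (h2 : G.Adj b c) (h3 : G.Adj c d) (h4 : G.Adj d a) (hab : a ≠ b) (hac : a ≠ c)
    (had : a ≠ d) (hbc : b ≠ c) (hbd : b ≠ d) (hcd : c ≠ d) :
    ¬ G.IsAcyclic := by
  intro hacy
  exact hacy (Walk.cons h1 (Walk.cons h2 (Walk.cons h3 (Walk.cons h4 Walk.nil))))
    (by simp [Walk.isCycle_def, Walk.isTrail_def, hab, hac, had, hbc, hbd, hcd,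
         hab.symm, hac.symm, had.symm, hbc.symm, hbd.symm, hcd.symm, Sym2.eq_iff])

def acyP (c : Code m) : Prop :=
  (c.1 = true → ∀ i, ¬((c.2 i).1 = true ∧ (c.2 i).2 = true)) ∧
    ∀ i j, ((c.2 i).1 = true ∧ (c.2 i).2 = true) →
      ((c.2 j).1 = true ∧ (c.2 j).2 = true) → i = j

instance (c : Code m) : Decidable (acyP c) := by unfold acyP; infer_instance

lemma zv_ne_zv {i j : Fin m} (h : i ≠ j) : zv m i ≠ zv m j := fun hc => h (zv_inj hc)

/-- a coloring certificate for non-reachability -/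
lemma not_reachable_of_color {V : Type*} {G : SimpleGraph V} (φ : V → Bool)
    (h : ∀ u v, G.Adj u v → φ u = φ v) {u v : V} (hne : φ u ≠ φ v) : ¬G.Reachable u v :=
  fun hr => hne (color_eq_of_reachable φ h hr)

lemma del_adj (c : Code m) (e : Sym2 (Fin (m + 2))) (u v : Fin (m + 2)) :
    (graphOf m c \ fromEdgeSet {e}).Adj u v ↔ (graphOf m c).Adj u v ∧ s(u, v) ≠ e := by
  rw [sdiff_adj, fromEdgeSet_adj]
  constructor
  · rintro ⟨h1, h2⟩
    exact ⟨h1, fun hc => h2 ⟨by simpa using hc, h1.ne⟩⟩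
  · rintro ⟨h1, h2⟩
    exact ⟨h1, fun hc => h2 (by simpa using hc.1)⟩

lemma isBridge_e {c : Code m} (hb : c.1 = true)
    (hnb : ∀ i, ¬((c.2 i).1 = true ∧ (c.2 i).2 = true)) :
    ¬(graphOf m c \ fromEdgeSet {s((0 : Fin (m+2)), 1)}).Reachable 0 1 := by
  apply not_reachable_of_color (colorY c (fun _ b => b))
  · intro u v huv
    rw [del_adj] at huv
    obtain ⟨huv, hne⟩ := huv
    rcases adj_cases huv with ⟨-, hc⟩ | ⟨i, (⟨h1, hc⟩ | ⟨h1, hc⟩)⟩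
    · exfalso
      rcases hc with ⟨rfl, rfl⟩ | ⟨rfl, rfl⟩
      · exact hne rfl
      · exact hne (Sym2.eq_swap)
    · have h2 : (c.2 i).2 = false := by
        rcases Bool.eq_false_or_eq_true (c.2 i).2 with h | h
        · exact absurd ⟨h1, h⟩ (hnb i)
        · exact h
      rcases hc with ⟨rfl, rfl⟩ | ⟨rfl, rfl⟩ <;> simp [h2]
    · rcases hc with ⟨rfl, rfl⟩ | ⟨rfl, rfl⟩ <;> simp [h1]
  · simp

lemma isBridge_x {c : Code m} (i : Fin m) (hacy : acyP c) (hx : (c.2 i).1 = true) :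
    ¬(graphOf m c \ fromEdgeSet {s((0 : Fin (m+2)), zv m i)}).Reachable 0 (zv m i) := by
  rcases (Bool.eq_false_or_eq_true (c.2 i).2).symm with hy | hy
  · -- z i has no other edge: indicator coloring
    apply not_reachable_of_color (fun v => decide (v = zv m i))
    · intro u v huv
      rw [del_adj] at huv
      obtain ⟨huv, hne⟩ := huv
      rcases adj_cases huv with ⟨-, hc⟩ | ⟨j, (⟨h1, hc⟩ | ⟨h1, hc⟩)⟩
      · rcases hc with ⟨rfl, rfl⟩ | ⟨rfl, rfl⟩ <;>
          simp [(zv_ne_zero i).symm, (zv_ne_one i).symm]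
      · by_cases hji : j = i
        · subst hji
          exfalso
          rcases hc with ⟨rfl, rfl⟩ | ⟨rfl, rfl⟩
          · exact hne rfl
          · exact hne Sym2.eq_swap
        · rcases hc with ⟨rfl, rfl⟩ | ⟨rfl, rfl⟩ <;>
            simp [(zv_ne_zero i).symm, zv_ne_zv hji]
      · by_cases hji : j = i
        · subst hji
          exact absurd h1 (by simp [hy])
        · rcases hc with ⟨rfl, rfl⟩ | ⟨rfl, rfl⟩ <;>
            simp [(zv_ne_one i).symm, zv_ne_zv hji]
    · simp [(zv_ne_zero i).symm]
  · -- both edges at z i: then no e, and z i is the unique doubly-attached vertex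
    have hb : c.1 = false := by
      rcases Bool.eq_false_or_eq_true c.1 with h | h
      · exact absurd ⟨hx, hy⟩ (hacy.1 h i)
      · exact h
    apply not_reachable_of_color (colorY c (fun _ b => b))
    · intro u v huv
      rw [del_adj] at huv
      obtain ⟨huv, hne⟩ := huv
      rcases adj_cases huv with ⟨h0, -⟩ | ⟨j, (⟨h1, hc⟩ | ⟨h1, hc⟩)⟩
      · exact absurd h0 (by simp [hb])
      · by_cases hji : j = i
        · subst hji
          exfalso
          rcases hc with ⟨rfl, rfl⟩ | ⟨rfl, rfl⟩
          · exact hne rfl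
          · exact hne Sym2.eq_swap
        · have h2 : (c.2 j).2 = false := by
            rcases Bool.eq_false_or_eq_true (c.2 j).2 with h | h
            · exact absurd (hacy.2 j i ⟨h1, h⟩ ⟨hx, hy⟩) hji
            · exact h
          rcases hc with ⟨rfl, rfl⟩ | ⟨rfl, rfl⟩ <;> simp [h2]
      · rcases hc with ⟨rfl, rfl⟩ | ⟨rfl, rfl⟩ <;> simp [h1]
    · simp [hy]

lemma isBridge_y {c : Code m} (i : Fin m) (hacy : acyP c) (hy : (c.2 i).2 = true) :
    ¬(graphOf m c \ fromEdgeSet {s((1 : Fin (m+2)), zv m i)}).Reachable 1 (zv m i) := by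
  rcases (Bool.eq_false_or_eq_true (c.2 i).1).symm with hx | hx
  · apply not_reachable_of_color (fun v => decide (v = zv m i))
    · intro u v huv
      rw [del_adj] at huv
      obtain ⟨huv, hne⟩ := huv
      rcases adj_cases huv with ⟨-, hc⟩ | ⟨j, (⟨h1, hc⟩ | ⟨h1, hc⟩)⟩
      · rcases hc with ⟨rfl, rfl⟩ | ⟨rfl, rfl⟩ <;>
          simp [(zv_ne_zero i).symm, (zv_ne_one i).symm]
      · by_cases hji : j = i
        · subst hji
          exact absurd h1 (by simp [hx])
        · rcases hc with ⟨rfl, rfl⟩ | ⟨rfl, rfl⟩ <;>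
            simp [(zv_ne_zero i).symm, zv_ne_zv hji]
      · by_cases hji : j = i
        · subst hji
          exfalso
          rcases hc with ⟨rfl, rfl⟩ | ⟨rfl, rfl⟩
          · exact hne rfl
          · exact hne Sym2.eq_swap
        · rcases hc with ⟨rfl, rfl⟩ | ⟨rfl, rfl⟩ <;>
            simp [(zv_ne_one i).symm, zv_ne_zv hji]
    · simp [(zv_ne_one i).symm]
  · have hb : c.1 = false := by
      rcases Bool.eq_false_or_eq_true c.1 with h | h
      · exact absurd ⟨hx, hy⟩ (hacy.1 h i)
      · exact h
    apply not_reachable_of_color (colorY c (fun j b => if j = i then false else b))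
    · intro u v huv
      rw [del_adj] at huv
      obtain ⟨huv, hne⟩ := huv
      rcases adj_cases huv with ⟨h0, -⟩ | ⟨j, (⟨h1, hc⟩ | ⟨h1, hc⟩)⟩
      · exact absurd h0 (by simp [hb])
      · by_cases hji : j = i
        · subst hji
          rcases hc with ⟨rfl, rfl⟩ | ⟨rfl, rfl⟩ <;> simp
        · have h2 : (c.2 j).2 = false := by
            rcases Bool.eq_false_or_eq_true (c.2 j).2 with h | h
            · exact absurd (hacy.2 j i ⟨h1, h⟩ ⟨hx, hy⟩) hji
            · exact h
          rcases hc with ⟨rfl, rfl⟩ | ⟨rfl, rfl⟩ <;> simp [h2, hji]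
      · by_cases hji : j = i
        · subst hji
          exfalso
          rcases hc with ⟨rfl, rfl⟩ | ⟨rfl, rfl⟩
          · exact hne rfl
          · exact hne Sym2.eq_swap
        · rcases hc with ⟨rfl, rfl⟩ | ⟨rfl, rfl⟩ <;> simp [h1, hji]
    · simp

lemma isAcyclic_iff_acyP (c : Code m) : (graphOf m c).IsAcyclic ↔ acyP c := by
  constructor
  · intro h
    constructor
    · rintro hb i ⟨h1, h2⟩
      exact not_acyclic_of_triangle ((adj_0z c i).mpr h1) ((adj_1z c i).mpr h2).symm
        ((adj_01 c).mpr hb).symm (zv_ne_zero i).symm zero_ne_one' (zv_ne_one i) h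
    · rintro i j ⟨hi1, hi2⟩ ⟨hj1, hj2⟩
      by_contra hij
      exact not_acyclic_of_square ((adj_0z c i).mpr hi1) ((adj_1z c i).mpr hi2).symm
        ((adj_1z c j).mpr hj2) ((adj_0z c j).mpr hj1).symm
        (zv_ne_zero i).symm zero_ne_one' (zv_ne_zero j).symm
        (zv_ne_one i) (zv_ne_zv hij) (zv_ne_one j).symm h
  · intro hacy
    rw [isAcyclic_iff_forall_adj_isBridge]
    intro v w hvw
    rw [isBridge_iff]
    rcases adj_cases hvw with ⟨hb, hc⟩ | ⟨i, (⟨h1, hc⟩ | ⟨h1, hc⟩)⟩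
    · rcases hc with ⟨rfl, rfl⟩ | ⟨rfl, rfl⟩
      · exact isBridge_e hb (hacy.1 hb)
      · rw [Sym2.eq_swap]
        exact fun hr => isBridge_e hb (hacy.1 hb) hr.symm
    · rcases hc with ⟨rfl, rfl⟩ | ⟨rfl, rfl⟩
      · exact isBridge_x i hacy h1
      · rw [Sym2.eq_swap]
        exact fun hr => isBridge_x i hacy h1 hr.symm
    · rcases hc with ⟨rfl, rfl⟩ | ⟨rfl, rfl⟩
      · exact isBridge_y i hacy h1
      · rw [Sym2.eq_swap]
        exact fun hr => isBridge_y i hacy h1 hr.symm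

end ThetaAux

namespace ThetaAux

variable {m : ℕ}

abbrev B2 := Bool × Bool

lemma card_bool_split {γ : Type*} [Fintype γ] (Q : Bool × γ → Prop) [DecidablePred Q] :
    Fintype.card {c : Bool × γ // Q c} =
      Fintype.card {g : γ // Q (false, g)} + Fintype.card {g : γ // Q (true, g)} := by
  classical
  rw [← Fintype.card_sum]
  apply Fintype.card_congr
  refine ((Equiv.boolProdEquivSum γ).subtypeEquiv
    (q := fun s => Q ((Equiv.boolProdEquivSum γ).symm s)) (fun c => by
      rcases c with ⟨(_|_), g⟩ <;> rfl)).trans ?_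
  refine Equiv.subtypeSum.trans ?_
  exact Equiv.sumCongr (Equiv.subtypeEquivRight fun g => Iff.rfl)
    (Equiv.subtypeEquivRight fun g => Iff.rfl)

lemma card_pi_all (S : B2 → Prop) [DecidablePred S] :
    Fintype.card {g : Fin m → B2 // ∀ i, S (g i)} = Fintype.card {a : B2 // S a} ^ m := by
  classical
  rw [Fintype.card_congr (Equiv.subtypePiEquivPi (p := fun _ a => S a))]
  rw [Fintype.card_fun, Fintype.card_fin]

lemma card_one_special (p q : B2 → Prop) [DecidablePred p] [DecidablePred q]
    (hdisj : ∀ a, p a → ¬q a) :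
    Fintype.card {g : Fin m → B2 // ∃ i, p (g i) ∧ ∀ j, j ≠ i → q (g j)} =
      m * (Fintype.card {a : B2 // p a} * Fintype.card {a : B2 // q a} ^ (m - 1)) := by
  classical
  rw [Fintype.card_subtype]
  have hset : (Finset.univ.filter fun g : Fin m → B2 => ∃ i, p (g i) ∧ ∀ j, j ≠ i → q (g j)) =
      Finset.univ.biUnion fun i : Fin m =>
        Finset.univ.filter fun g : Fin m → B2 => p (g i) ∧ ∀ j, j ≠ i → q (g j) := by
    ext g
    simp
  rw [hset, Finset.card_biUnion]
  · have hpiece : ∀ i : Fin m,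
        (Finset.univ.filter fun g : Fin m → B2 => p (g i) ∧ ∀ j, j ≠ i → q (g j)).card =
          Fintype.card {a : B2 // p a} * Fintype.card {a : B2 // q a} ^ (m - 1) := by
      intro i
      rw [← Fintype.card_subtype]
      have e1 : {g : Fin m → B2 // p (g i) ∧ ∀ j, j ≠ i → q (g j)} ≃
          {x : B2 × ({j : Fin m // j ≠ i} → B2) // p x.1 ∧ ∀ j, q (x.2 j)} := by
        refine (Equiv.piSplitAt i (fun _ => B2)).subtypeEquiv (fun g => ?_)
        constructor
        · rintro ⟨h1, h2⟩
          exact ⟨h1, fun j => h2 j.1 j.2⟩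
        · rintro ⟨h1, h2⟩
          exact ⟨h1, fun j hj => h2 ⟨j, hj⟩⟩
      have e2 := (e1.trans (Equiv.subtypeProdEquivProd (p := p)
        (q := fun h : {j : Fin m // j ≠ i} → B2 => ∀ j, q (h j)))).trans
        ((Equiv.refl _).prodCongr (Equiv.subtypePiEquivPi (p := fun _ a => q a)))
      rw [Fintype.card_congr e2, Fintype.card_prod, Fintype.card_fun]
      congr 2
      have : Fintype.card {j : Fin m // j ≠ i} = m - 1 := by
        simp [Fintype.card_subtype_compl]
      simpa using this
    rw [Finset.sum_congr rfl (fun i _ => hpiece i), Finset.sum_const, Finset.card_univ,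
      Fintype.card_fin, smul_eq_mul]
  · intro a _ b _ hab
    rw [Function.onFun, Finset.disjoint_left]
    intro g hg hg'
    simp only [Finset.mem_filter] at hg hg'
    exact hdisj _ hg.2.1 (hg'.2.2 a hab)

end ThetaAux

namespace ThetaAux

variable {m : ℕ}

lemma card_subtype_or' {α : Type*} [Fintype α] [DecidableEq α] (p q : α → Prop)
    [DecidablePred p] [DecidablePred q] (h : ∀ x, p x → ¬q x) :
    Fintype.card {x : α // p x ∨ q x} =
      Fintype.card {x : α // p x} + Fintype.card {x : α // q x} := by
  rw [Fintype.card_subtype, Fintype.card_subtype, Fintype.card_subtype,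
    Finset.filter_or, Finset.card_union_of_disjoint]
  rw [Finset.disjoint_left]
  intro a ha hb
  simp only [Finset.mem_filter] at ha hb
  exact h a ha.2 hb.2

def bothB (a : B2) : Prop := a.1 = true ∧ a.2 = true
def oneB (a : B2) : Prop := a.1 = true ∨ a.2 = true

instance : DecidablePred (bothB) := fun a => by unfold bothB; infer_instance
instance : DecidablePred (oneB) := fun a => by unfold oneB; infer_instance

lemma card_both : Fintype.card {a : B2 // bothB a} = 1 := by decide
lemma card_nboth : Fintype.card {a : B2 // ¬bothB a} = 3 := by decide
lemma card_exactly : Fintype.card {a : B2 // ¬bothB a ∧ oneB a} = 2 := by decide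

lemma count1 :
    Nat.card {H : SimpleGraph (Fin (m + 2)) //
        H ≤ thetaGraph m ∧ H.IsAcyclic ∧ H.Adj 0 1 ∧ H.Connected} = 2 ^ m := by
  rw [card_transfer (fun H => H.IsAcyclic ∧ H.Adj 0 1 ∧ H.Connected)
    (fun c => acyP c ∧ c.1 = true ∧ connP c)
    (fun c => and_congr (isAcyclic_iff_acyP c)
      (and_congr (adj_01 c) (connected_iff_connP c)))]
  rw [card_bool_split]
  have h0 : Fintype.card {g : Fin m → B2 // acyP (false, g) ∧ (false : Bool) = true ∧
      connP (false, g)} = 0 := by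
    rw [Fintype.card_eq_zero_iff]
    exact ⟨fun x => Bool.false_ne_true x.2.2.1⟩
  have h1 : Fintype.card {g : Fin m → B2 // acyP (true, g) ∧ (true : Bool) = true ∧
      connP (true, g)} = 2 ^ m := by
    rw [Fintype.card_congr (Equiv.subtypeEquivRight
      (q := fun g : Fin m → B2 => ∀ i, ¬bothB (g i) ∧ oneB (g i)) (fun g => ?_))]
    · exact (card_pi_all (fun a => ¬bothB a ∧ oneB a)).trans (by rw [card_exactly])
    constructor
    · rintro ⟨ha, -, hc⟩
      exact fun i => ⟨ha.1 rfl i, hc.1 i⟩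
    · intro h
      exact ⟨⟨fun _ i => (h i).1, fun i j hi _ => absurd hi (h i).1⟩, rfl,
        ⟨fun i => (h i).2, Or.inl rfl⟩⟩
  rw [h0, h1, Nat.zero_add]

lemma count3 :
    Nat.card {H : SimpleGraph (Fin (m + 2)) //
        H ≤ thetaGraph m ∧ H.IsAcyclic ∧ H.Adj 0 1} = 3 ^ m := by
  rw [card_transfer (fun H => H.IsAcyclic ∧ H.Adj 0 1)
    (fun c => acyP c ∧ c.1 = true)
    (fun c => and_congr (isAcyclic_iff_acyP c) (adj_01 c))]
  rw [card_bool_split]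
  have h0 : Fintype.card {g : Fin m → B2 // acyP (false, g) ∧ (false : Bool) = true} = 0 := by
    rw [Fintype.card_eq_zero_iff]
    exact ⟨fun x => Bool.false_ne_true x.2.2⟩
  have h1 : Fintype.card {g : Fin m → B2 // acyP (true, g) ∧ (true : Bool) = true} = 3 ^ m := by
    rw [Fintype.card_congr (Equiv.subtypeEquivRight
      (q := fun g : Fin m → B2 => ∀ i, ¬bothB (g i)) (fun g => ?_))]
    · exact (card_pi_all (fun a => ¬bothB a)).trans (by rw [card_nboth])
    constructor
    · rintro ⟨ha, -⟩
      exact ha.1 rfl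
    · intro h
      exact ⟨⟨fun _ => h, fun i j hi _ => absurd hi (h i)⟩, rfl⟩
  rw [h0, h1, Nat.zero_add]

lemma acy_false_iff (g : Fin m → B2) :
    acyP (false, g) ↔ (∀ i, ¬bothB (g i)) ∨
      (∃ i, bothB (g i) ∧ ∀ j, j ≠ i → ¬bothB (g j)) := by
  constructor
  · rintro ⟨-, h2⟩
    by_cases hex : ∃ i, bothB (g i)
    · obtain ⟨i, hi⟩ := hex
      exact Or.inr ⟨i, hi, fun j hj hbj => hj (h2 j i hbj hi)⟩
    · exact Or.inl fun i hbi => hex ⟨i, hbi⟩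
  · rintro (h | ⟨i, hi, ho⟩)
    · exact ⟨fun hb => Bool.noConfusion hb, fun i j hi _ => absurd hi (h i)⟩
    · refine ⟨fun hb => Bool.noConfusion hb, fun j k hj hk => ?_⟩
      have hji : j = i := by
        by_contra hji
        exact ho j hji hj
      have hki : k = i := by
        by_contra hki
        exact ho k hki hk
      rw [hji, hki]

lemma count2 :
    Nat.card {H : SimpleGraph (Fin (m + 2)) // H ≤ thetaGraph m ∧ H.IsAcyclic} =
      2 * 3 ^ m + m * 3 ^ (m - 1) := by
  rw [card_transfer (fun H => H.IsAcyclic) acyP (fun c => isAcyclic_iff_acyP c)]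
  rw [card_bool_split]
  have h1 : Fintype.card {g : Fin m → B2 // acyP (true, g)} = 3 ^ m := by
    rw [Fintype.card_congr (Equiv.subtypeEquivRight
      (q := fun g : Fin m → B2 => ∀ i, ¬bothB (g i)) (fun g => ?_))]
    · exact (card_pi_all (fun a => ¬bothB a)).trans (by rw [card_nboth])
    constructor
    · intro ha
      exact ha.1 rfl
    · intro h
      exact ⟨fun _ => h, fun i j hi _ => absurd hi (h i)⟩
  have h0 : Fintype.card {g : Fin m → B2 // acyP (false, g)} =
      3 ^ m + m * (1 * 3 ^ (m - 1)) := by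
    rw [Fintype.card_congr (Equiv.subtypeEquivRight (fun g => acy_false_iff g))]
    rw [card_subtype_or' _ _ (fun g hg => by
      rintro ⟨i, hi, -⟩
      exact hg i hi)]
    have hA : Fintype.card {x : Fin m → B2 // ∀ i, ¬bothB (x i)} = 3 ^ m :=
      (card_pi_all (fun a => ¬bothB a)).trans (by rw [card_nboth])
    have hB : Fintype.card
        {x : Fin m → B2 // ∃ i, bothB (x i) ∧ ∀ j, j ≠ i → ¬bothB (x j)} =
          m * (1 * 3 ^ (m - 1)) :=
      (card_one_special bothB (fun a => ¬bothB a) (fun a ha hna => hna ha)).trans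
        (by rw [card_both, card_nboth])
    rw [hA, hB]
  rw [h0, h1]
  ring

lemma count4 :
    Nat.card {H : SimpleGraph (Fin (m + 2)) //
        H ≤ thetaGraph m ∧ H.IsAcyclic ∧ H.Connected} =
      2 ^ m + m * 2 ^ (m - 1) := by
  rw [card_transfer (fun H => H.IsAcyclic ∧ H.Connected)
    (fun c => acyP c ∧ connP c)
    (fun c => and_congr (isAcyclic_iff_acyP c) (connected_iff_connP c))]
  rw [card_bool_split]
  have h1 : Fintype.card {g : Fin m → B2 // acyP (true, g) ∧ connP (true, g)} = 2 ^ m := by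
    rw [Fintype.card_congr (Equiv.subtypeEquivRight
      (q := fun g : Fin m → B2 => ∀ i, ¬bothB (g i) ∧ oneB (g i)) (fun g => ?_))]
    · exact (card_pi_all (fun a => ¬bothB a ∧ oneB a)).trans (by rw [card_exactly])
    constructor
    · rintro ⟨ha, hc⟩
      exact fun i => ⟨ha.1 rfl i, hc.1 i⟩
    · intro h
      exact ⟨⟨fun _ i => (h i).1, fun i j hi _ => absurd hi (h i).1⟩,
        ⟨fun i => (h i).2, Or.inl rfl⟩⟩
  have h0 : Fintype.card {g : Fin m → B2 // acyP (false, g) ∧ connP (false, g)} =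
      m * (1 * 2 ^ (m - 1)) := by
    rw [Fintype.card_congr (Equiv.subtypeEquivRight
      (q := fun g : Fin m → B2 =>
        ∃ i, bothB (g i) ∧ ∀ j, j ≠ i → (¬bothB (g j) ∧ oneB (g j))) (fun g => ?_))]
    · exact card_one_special bothB (fun a => ¬bothB a ∧ oneB a)
        (fun a ha hna => hna.1 ha)
    constructor
    · rintro ⟨ha, hc⟩
      rcases hc.2 with hb | ⟨i, hi⟩
      · exact Bool.noConfusion hb
      · exact ⟨i, hi, fun j hj => ⟨fun hbj => hj (ha.2 j i hbj hi), hc.1 j⟩⟩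
    · rintro ⟨i, hi, ho⟩
      refine ⟨⟨fun hb => Bool.noConfusion hb, fun j k hj hk => ?_⟩,
        ⟨fun j => ?_, Or.inr ⟨i, hi⟩⟩⟩
      · have hji : j = i := by
          by_contra hji
          exact (ho j hji).1 hj
        have hki : k = i := by
          by_contra hki
          exact (ho k hki).1 hk
        rw [hji, hki]
      · by_cases hji : j = i
        · rw [hji]
          exact Or.inl hi.1
        · exact (ho j hji).2
  rw [h0, h1]
  ring

end ThetaAux

/-- Under the uniform measure on spanning forests of `thetaGraph m` with `m > 6`, the
events "the edge `xy` is in the forest" and "the forest is a spanning tree" are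
strictly negatively correlated (stated in cross-multiplied counting form). -/
theorem stmt_16 (m : ℕ) (hm : 6 < m) :
    Nat.card {H : SimpleGraph (Fin (m + 2)) //
        H ≤ thetaGraph m ∧ H.IsAcyclic ∧ H.Adj 0 1 ∧ H.Connected} *
      Nat.card {H : SimpleGraph (Fin (m + 2)) // H ≤ thetaGraph m ∧ H.IsAcyclic} <
    Nat.card {H : SimpleGraph (Fin (m + 2)) //
        H ≤ thetaGraph m ∧ H.IsAcyclic ∧ H.Adj 0 1} *
      Nat.card {H : SimpleGraph (Fin (m + 2)) //
        H ≤ thetaGraph m ∧ H.IsAcyclic ∧ H.Connected} := by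
  rw [ThetaAux.count1, ThetaAux.count2, ThetaAux.count3, ThetaAux.count4]
  obtain ⟨k, rfl⟩ : ∃ k, m = k + 1 := ⟨m - 1, by omega⟩
  have hk : 6 ≤ k := by omega
  have hsub : (k + 1) - 1 = k := by omega
  rw [hsub]
  have h1 : 2 ^ (k + 1) * (2 * 3 ^ (k + 1) + (k + 1) * 3 ^ k) =
      (2 ^ k * 3 ^ k) * (2 * k + 14) := by
    rw [pow_succ, pow_succ]
    ring
  have h2 : 3 ^ (k + 1) * (2 ^ (k + 1) + (k + 1) * 2 ^ k) =
      (2 ^ k * 3 ^ k) * (3 * k + 9) := by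
    rw [pow_succ, pow_succ]
    ring
  rw [h1, h2]
  exact Nat.mul_lt_mul_of_pos_left (by omega) (by positivity)
end

section
/- Let G = (V,E) be a finite graph with edge weights p_e = q for all e, and let φ_q = φ_{p,q} be the corresponding random cluster measure. As q → 0⁺, φ_q converges to the uniform measure on spanning forests of G: for every η ∈ {0,1}^E, lim_{q→0⁺} φ_q(η) = 1/N if η is a forest (acyclic), and 0 otherwise, where N is the number of spanning forests of G. -/
open Finset
open scoped Classical

section Aux

open SimpleGraph

variable {V : Type*}


private lemma del_adj {G : SimpleGraph V} {u v a b : V} :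
    (G \ fromEdgeSet {s(u,v)}).Adj a b ↔ G.Adj a b ∧ s(a,b) ≠ s(u,v) := by
  simp only [sdiff_adj, fromEdgeSet_adj, Set.mem_singleton_iff]
  exact ⟨fun ⟨h, h2⟩ => ⟨h, fun he => h2 ⟨he, h.ne⟩⟩, fun ⟨h, h2⟩ => ⟨h, fun he => h2 he.1⟩⟩

private lemma reach_cases {G : SimpleGraph V} {u v a b : V} (w : G.Walk a b) :
    (G \ fromEdgeSet {s(u,v)}).Reachable a b ∨
      ((G \ fromEdgeSet {s(u,v)}).Reachable a u ∧ (G \ fromEdgeSet {s(u,v)}).Reachable b v) ∨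
      ((G \ fromEdgeSet {s(u,v)}).Reachable a v ∧ (G \ fromEdgeSet {s(u,v)}).Reachable b u) := by
  set D := G \ fromEdgeSet {s(u,v)} with hD
  induction w with
  | nil => exact Or.inl (Reachable.refl _)
  | @cons a c b h w ih =>
    by_cases he : s(a,c) = s(u,v)
    · rw [Sym2.eq_iff] at he
      rcases he with ⟨rfl, rfl⟩ | ⟨rfl, rfl⟩
      · rcases ih with r | ⟨r1, r2⟩ | ⟨r1, r2⟩
        · exact Or.inr (Or.inl ⟨Reachable.refl _, r.symm⟩)
        · exact Or.inl (r1.symm.trans r2.symm)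
        · exact Or.inl r2.symm
      · rcases ih with r | ⟨r1, r2⟩ | ⟨r1, r2⟩
        · exact Or.inr (Or.inr ⟨Reachable.refl _, r.symm⟩)
        · exact Or.inl r2.symm
        · exact Or.inl (r1.symm.trans r2.symm)
    · have hD : D.Adj a c := del_adj.2 ⟨h, he⟩
      rcases ih with r | ⟨r1, r2⟩ | ⟨r1, r2⟩
      · exact Or.inl (hD.reachable.trans r)
      · exact Or.inr (Or.inl ⟨hD.reachable.trans r1, r2⟩)
      · exact Or.inr (Or.inr ⟨hD.reachable.trans r1, r2⟩)

/-- map on components, with the case analysis -/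
private lemma comp_cases {G : SimpleGraph V} {u v : V}
    (C₁ C₂ : (G \ fromEdgeSet {s(u,v)}).ConnectedComponent)
    (h : C₁.map (Hom.ofLE sdiff_le) = C₂.map (Hom.ofLE sdiff_le)) :
    C₁ = C₂ ∨
      (C₁ = (G \ fromEdgeSet {s(u,v)}).connectedComponentMk u ∧
        C₂ = (G \ fromEdgeSet {s(u,v)}).connectedComponentMk v) ∨
      (C₁ = (G \ fromEdgeSet {s(u,v)}).connectedComponentMk v ∧
        C₂ = (G \ fromEdgeSet {s(u,v)}).connectedComponentMk u) := by
  induction C₁ using SimpleGraph.ConnectedComponent.ind with | _ a => ?_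
  induction C₂ using SimpleGraph.ConnectedComponent.ind with | _ b => ?_
  rw [ConnectedComponent.map_mk, ConnectedComponent.map_mk] at h
  simp only [Hom.ofLE_apply, ConnectedComponent.eq] at h
  obtain ⟨w⟩ := h
  rcases reach_cases (u := u) (v := v) w with r | ⟨r1, r2⟩ | ⟨r1, r2⟩
  · exact Or.inl (ConnectedComponent.sound r)
  · exact Or.inr (Or.inl ⟨ConnectedComponent.sound r1, ConnectedComponent.sound r2⟩)
  · exact Or.inr (Or.inr ⟨ConnectedComponent.sound r1, ConnectedComponent.sound r2⟩)

private noncomputable def delMap {G : SimpleGraph V} (u v : V) :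
    (G \ fromEdgeSet {s(u,v)}).ConnectedComponent → G.ConnectedComponent ⊕ Unit :=
  fun C => if C = (G \ fromEdgeSet {s(u,v)}).connectedComponentMk v then Sum.inr ()
    else Sum.inl (C.map (Hom.ofLE sdiff_le))

private lemma delMap_inj {G : SimpleGraph V} (u v : V) :
    Function.Injective (delMap (G := G) u v) := by
  intro C₁ C₂ hg
  unfold delMap at hg
  by_cases h1 : C₁ = (G \ fromEdgeSet {s(u,v)}).connectedComponentMk v <;>
    by_cases h2 : C₂ = (G \ fromEdgeSet {s(u,v)}).connectedComponentMk v <;>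
    simp [h1, h2] at hg
  · exact h1.trans h2.symm
  · rcases comp_cases C₁ C₂ hg with h | ⟨ha, hb⟩ | ⟨ha, hb⟩
    · exact h
    · exact absurd hb h2
    · exact absurd ha h1

private lemma card_comp_del_le [Finite V] {G : SimpleGraph V} (u v : V) :
    Nat.card (G \ fromEdgeSet {s(u,v)}).ConnectedComponent
      ≤ Nat.card G.ConnectedComponent + 1 := by
  have := Nat.card_le_card_of_injective _ (delMap_inj (G := G) u v)
  simpa [Nat.card_sum] using this

private lemma card_comp_del_bridge [Finite V] {G : SimpleGraph V} {u v : V} (h : G.Adj u v)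
    (hb : ¬ (G \ fromEdgeSet {s(u,v)}).Reachable u v) :
    Nat.card (G \ fromEdgeSet {s(u,v)}).ConnectedComponent
      = Nat.card G.ConnectedComponent + 1 := by
  have hsurj : Function.Surjective (delMap (G := G) u v) := by
    rintro (C | ⟨⟩)
    · induction C using SimpleGraph.ConnectedComponent.ind with | _ a => ?_
      by_cases hav : (G \ fromEdgeSet {s(u,v)}).Reachable a v
      · refine ⟨(G \ fromEdgeSet {s(u,v)}).connectedComponentMk u, ?_⟩
        have hne : (G \ fromEdgeSet {s(u,v)}).connectedComponentMk u
            ≠ (G \ fromEdgeSet {s(u,v)}).connectedComponentMk v := by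
          simpa [ConnectedComponent.eq] using hb
        have hGua : G.Reachable u a :=
          h.reachable.trans (Reachable.mono sdiff_le hav).symm
        simp [delMap, hne, ConnectedComponent.map_mk, Hom.ofLE_apply,
          ConnectedComponent.sound hGua]
      · refine ⟨(G \ fromEdgeSet {s(u,v)}).connectedComponentMk a, ?_⟩
        have hne : (G \ fromEdgeSet {s(u,v)}).connectedComponentMk a
            ≠ (G \ fromEdgeSet {s(u,v)}).connectedComponentMk v := by
          simpa [ConnectedComponent.eq] using hav
        simp [delMap, hne, ConnectedComponent.map_mk, Hom.ofLE_apply]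
    · exact ⟨_, if_pos rfl⟩
  have := Nat.card_eq_of_bijective _ ⟨delMap_inj (G := G) u v, hsurj⟩
  simpa [Nat.card_sum] using this

private lemma card_comp_del_nonbridge [Finite V] {G : SimpleGraph V} {u v : V}
    (hr : (G \ fromEdgeSet {s(u,v)}).Reachable u v) :
    Nat.card (G \ fromEdgeSet {s(u,v)}).ConnectedComponent
      = Nat.card G.ConnectedComponent := by
  apply Nat.card_eq_of_bijective (fun C => C.map (Hom.ofLE sdiff_le))
  constructor
  · intro C₁ C₂ hg
    rcases comp_cases C₁ C₂ hg with h | ⟨ha, hb⟩ | ⟨ha, hb⟩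
    · exact h
    · rw [ha, hb]; exact ConnectedComponent.sound hr
    · rw [ha, hb]; exact (ConnectedComponent.sound hr).symm
  · intro C
    induction C using SimpleGraph.ConnectedComponent.ind with | _ a => ?_
    exact ⟨(G \ fromEdgeSet {s(u,v)}).connectedComponentMk a,
      by simp [ConnectedComponent.map_mk, Hom.ofLE_apply]⟩

private lemma card_comp_bot [Finite V] :
    Nat.card (⊥ : SimpleGraph V).ConnectedComponent = Nat.card V := by
  symm
  apply Nat.card_eq_of_bijective (fun a => (⊥ : SimpleGraph V).connectedComponentMk a)
  constructor
  · intro a b hab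
    rw [ConnectedComponent.eq, reachable_bot] at hab
    exact hab
  · intro C
    induction C using SimpleGraph.ConnectedComponent.ind with | _ a => ?_
    exact ⟨a, rfl⟩


private lemma del_edgeSet {G : SimpleGraph V} {u v : V} (h : G.Adj u v) :
    (G \ fromEdgeSet {s(u,v)}).edgeSet = G.edgeSet \ {s(u,v)} := by
  rw [edgeSet_sdiff, edgeSet_fromEdgeSet]
  ext e
  simp only [Set.mem_diff, Set.mem_singleton_iff, Set.mem_setOf_eq, not_and, not_not]
  constructor
  · rintro ⟨he, h2⟩
    refine ⟨he, fun heq => ?_⟩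
    subst heq
    exact (G.not_isDiag_of_mem_edgeSet he) (h2 rfl)
  · rintro ⟨he, h2⟩
    exact ⟨he, fun heq => absurd heq h2⟩

private lemma del_ncard {G : SimpleGraph V} [Finite V] {u v : V} (h : G.Adj u v) :
    (G \ fromEdgeSet {s(u,v)}).edgeSet.ncard = G.edgeSet.ncard - 1 := by
  rw [del_edgeSet h, Set.ncard_diff_singleton_of_mem (G.mem_edgeSet.2 h)]

private lemma card_comp_add_le [Fintype V] (G : SimpleGraph V) :
    Fintype.card V ≤ Nat.card G.ConnectedComponent + G.edgeSet.ncard := by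
  generalize hn : G.edgeSet.ncard = n
  induction n generalizing G with
  | zero =>
    have hbot : G = ⊥ := by
      rw [← edgeSet_eq_empty]
      exact (Set.ncard_eq_zero G.edgeSet.toFinite).1 hn
    subst hbot
    rw [card_comp_bot, Nat.card_eq_fintype_card]
    omega
  | succ n ih =>
    have hne : G.edgeSet.Nonempty := by
      rw [Set.nonempty_iff_ne_empty]
      intro h0
      rw [h0, Set.ncard_empty] at hn
      omega
    obtain ⟨e, he⟩ := hne
    induction e using Sym2.ind with | _ u v => ?_
    have hadj : G.Adj u v := G.mem_edgeSet.1 he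
    have h1 := ih (G \ fromEdgeSet {s(u,v)}) (by rw [del_ncard hadj, hn]; omega)
    have h2 := card_comp_del_le (G := G) u v
    omega

private lemma card_comp_add_eq [Fintype V] (G : SimpleGraph V) (hG : G.IsAcyclic) :
    Nat.card G.ConnectedComponent + G.edgeSet.ncard = Fintype.card V := by
  generalize hn : G.edgeSet.ncard = n
  induction n generalizing G with
  | zero =>
    have hbot : G = ⊥ := by
      rw [← edgeSet_eq_empty]
      exact (Set.ncard_eq_zero G.edgeSet.toFinite).1 hn
    subst hbot
    rw [card_comp_bot, Nat.card_eq_fintype_card]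
    omega
  | succ n ih =>
    have hne : G.edgeSet.Nonempty := by
      rw [Set.nonempty_iff_ne_empty]
      intro h0
      rw [h0, Set.ncard_empty] at hn
      omega
    obtain ⟨e, he⟩ := hne
    induction e using Sym2.ind with | _ u v => ?_
    have hadj : G.Adj u v := G.mem_edgeSet.1 he
    have hb : G.IsBridge s(u,v) := isAcyclic_iff_forall_edge_isBridge.1 hG he
    have hDac : (G \ fromEdgeSet {s(u,v)}).IsAcyclic := fun a c hc =>
      hG (c.mapLe sdiff_le) (hc.mapLe _)
    have h1 := ih (G \ fromEdgeSet {s(u,v)}) hDac (by rw [del_ncard hadj, hn]; omega)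
    have h2 := card_comp_del_bridge hadj (isBridge_iff.1 hb)
    omega

private lemma card_comp_add_lt [Fintype V] (G : SimpleGraph V) (hG : ¬ G.IsAcyclic) :
    Fintype.card V < Nat.card G.ConnectedComponent + G.edgeSet.ncard := by
  rw [SimpleGraph.IsAcyclic] at hG
  push_neg at hG
  obtain ⟨x, c, hc⟩ := hG
  have hne : c.edges ≠ [] := by
    intro h0
    have h3 := hc.three_le_length
    have := c.length_edges
    rw [h0] at this
    simp at this
    omega
  obtain ⟨e, hemem⟩ := List.exists_mem_of_ne_nil _ hne
  have heE : e ∈ G.edgeSet := c.edges_subset_edgeSet hemem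
  induction e using Sym2.ind with | _ u v => ?_
  have hadj : G.Adj u v := G.mem_edgeSet.1 heE
  have hnb : ¬ G.IsBridge s(u,v) := by
    intro hb
    exact (isBridge_iff_forall_cycle_notMem heE).1 hb c hc hemem
  have hr : (G \ fromEdgeSet {s(u,v)}).Reachable u v := by
    by_contra h
    exact hnb (isBridge_iff.2 h)
  have h1 := card_comp_add_le (G \ fromEdgeSet {s(u,v)})
  rw [del_ncard hadj, card_comp_del_nonbridge hr] at h1
  have hm : 0 < G.edgeSet.ncard := by
    rw [Set.ncard_pos G.edgeSet.toFinite]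
    exact ⟨_, heE⟩
  omega

section OpenSub

variable {E : Type*}

private lemma openSub_edgeSet (ends : E → Sym2 V) (hloop : ∀ f, ¬ (ends f).IsDiag)
    (τ : E → Bool) :
    (openSub ends τ).edgeSet = ends '' {f | τ f = true} := by
  rw [openSub, edgeSet_fromEdgeSet]
  ext e
  simp only [Set.mem_diff, Set.mem_setOf_eq, Set.mem_image]
  constructor
  · rintro ⟨⟨f, hf, rfl⟩, -⟩; exact ⟨f, hf, rfl⟩
  · rintro ⟨f, hf, rfl⟩; exact ⟨⟨f, hf, rfl⟩, hloop f⟩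

private lemma openSub_ncard [Fintype E] (ends : E → Sym2 V)
    (hinj : Function.Injective ends) (hloop : ∀ f, ¬ (ends f).IsDiag) (τ : E → Bool) :
    (openSub ends τ).edgeSet.ncard = #(univ.filter fun f => τ f = true) := by
  rw [openSub_edgeSet ends hloop, Set.ncard_image_of_injective _ hinj, ← Set.ncard_coe_finset]
  congr 1
  ext f
  simp

end OpenSub

end Aux

/-- As `q → 0⁺` with all edge weights `p_e = q`, the random-cluster measure converges
to the uniform measure on spanning forests (acyclic edge configurations). -/
theorem stmt_17 {V E : Type*} [Fintype V] [Fintype E] [DecidableEq E]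
    (ends : E → Sym2 V)
    (hinj : Function.Injective ends) (hloop : ∀ f, ¬ (ends f).IsDiag)
    (η : E → Bool) :
    Filter.Tendsto (fun q : ℝ => rcMeasure ends (fun _ => q) q η)
      (nhdsWithin 0 (Set.Ioi 0))
      (nhds (if (openSub ends η).IsAcyclic then
        ((Nat.card {τ : E → Bool // (openSub ends τ).IsAcyclic} : ℝ))⁻¹ else 0)) := by
  classical
  set n := Fintype.card V with hn
  set m := Fintype.card E with hm
  set j : (E → Bool) → ℕ := fun τ => #(univ.filter fun f => τ f = true) with hjdef
  set c : (E → Bool) → ℕ := fun τ => numComp ends τ + j τ - n with hcdef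
  have hge : ∀ τ, n ≤ numComp ends τ + j τ := by
    intro τ
    have h := card_comp_add_le (openSub ends τ)
    rwa [openSub_ncard ends hinj hloop] at h
  have hkey : ∀ τ, numComp ends τ + j τ = n + c τ := by
    intro τ
    have := hge τ
    simp only [hcdef]
    omega
  have hc0 : ∀ τ, c τ = 0 ↔ (openSub ends τ).IsAcyclic := by
    intro τ
    constructor
    · intro h0
      by_contra hna
      have h := card_comp_add_lt (openSub ends τ) hna
      rw [openSub_ncard ends hinj hloop] at h
      have h2 := hkey τ
      have hje : j τ = #(Finset.filter (fun f => τ f = true) univ) := rfl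
      have hnc : numComp ends τ = Nat.card (openSub ends τ).ConnectedComponent := rfl
      omega
    · intro ha
      have h := card_comp_add_eq (openSub ends τ) ha
      rw [openSub_ncard ends hinj hloop] at h
      have h2 := hkey τ
      have hje : j τ = #(Finset.filter (fun f => τ f = true) univ) := rfl
      have hnc : numComp ends τ = Nat.card (openSub ends τ).ConnectedComponent := rfl
      omega
  set A : (E → Bool) → ℝ → ℝ := fun τ q => q ^ c τ * (1 - q) ^ (m - j τ) with hAdef
  have hw : ∀ (q : ℝ) (τ), rcWeight ends (fun _ => q) q τ = q ^ n * A τ q := by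
    intro q τ
    have hprod : (∏ f, if τ f then q else 1 - q) = q ^ j τ * (1 - q) ^ (m - j τ) := by
      rw [Finset.prod_ite]
      simp only [Finset.prod_const]
      congr 2
      have := Finset.card_filter_add_card_filter_not
        (s := (univ : Finset E)) (p := fun f => τ f = true)
      simp only [Finset.card_univ] at this
      simp only [hjdef, hm]
      omega
    rw [rcWeight, hprod, hAdef]
    have h1 : q ^ (j τ) * (1 - q) ^ (m - j τ) * q ^ numComp ends τ
        = q ^ (numComp ends τ + j τ) * (1 - q) ^ (m - j τ) := by
      rw [pow_add]; ring
    rw [h1, hkey τ, pow_add]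
    ring
  have hmeas : ∀ q ∈ Set.Ioi (0 : ℝ),
      rcMeasure ends (fun _ => q) q η = A η q / ∑ τ, A τ q := by
    intro q hq
    rw [rcMeasure]
    simp only [hw]
    rw [← Finset.mul_sum, mul_div_mul_left]
    exact pow_ne_zero _ (ne_of_gt hq)
  have hA0 : ∀ τ, A τ 0 = if (openSub ends τ).IsAcyclic then 1 else 0 := by
    intro τ
    by_cases h : (openSub ends τ).IsAcyclic
    · have h0 : c τ = 0 := (hc0 τ).2 h
      simp [hAdef, h0, h]
    · have h0 : c τ ≠ 0 := fun h0 => h ((hc0 τ).1 h0)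
      simp [hAdef, h, zero_pow h0]
  have hN : (∑ τ : E → Bool, A τ 0)
      = (Nat.card {τ : E → Bool // (openSub ends τ).IsAcyclic} : ℝ) := by
    simp only [hA0]
    rw [Finset.sum_boole, Nat.card_eq_fintype_card, Fintype.card_subtype]
  have hNpos : 0 < Nat.card {τ : E → Bool // (openSub ends τ).IsAcyclic} := by
    have hbot : openSub ends (fun _ => false) = ⊥ := by
      have : {s | ∃ f, (fun _ => false) f = true ∧ ends f = s} = (∅ : Set (Sym2 V)) := by
        ext s; simp
      rw [openSub, this, SimpleGraph.fromEdgeSet_empty]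
    have : Nonempty {τ : E → Bool // (openSub ends τ).IsAcyclic} :=
      ⟨⟨fun _ => false, by rw [hbot]; exact SimpleGraph.isAcyclic_bot⟩⟩
    exact Nat.card_pos
  have hden : (∑ τ : E → Bool, A τ 0) ≠ 0 := by
    rw [hN]
    exact_mod_cast hNpos.ne'
  have hcont : ∀ τ, Continuous (A τ) := by
    intro τ
    exact (continuous_pow _).mul ((continuous_const.sub continuous_id).pow _)
  have htend : Filter.Tendsto (fun q => A η q / ∑ τ, A τ q)
      (nhdsWithin 0 (Set.Ioi 0)) (nhds (A η 0 / ∑ τ, A τ 0)) := by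
    apply Filter.Tendsto.mono_left _ nhdsWithin_le_nhds
    exact ((hcont η).tendsto 0).div
      ((continuous_finset_sum _ fun τ _ => hcont τ).tendsto 0) hden
  have hval : A η 0 / (∑ τ : E → Bool, A τ 0)
      = (if (openSub ends η).IsAcyclic then
          ((Nat.card {τ : E → Bool // (openSub ends τ).IsAcyclic} : ℝ))⁻¹ else 0) := by
    rw [hA0 η, hN]
    by_cases h : (openSub ends η).IsAcyclic
    · simp [h, one_div]
    · simp [h]
  rw [← hval]
  refine Filter.Tendsto.congr' ?_ htend
  filter_upwards [eventually_mem_nhdsWithin] with q hq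
  exact (hmeas q hq).symm
end
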